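/- arXiv:1201.4153 — 2 statements merged into one kernel-verified Lean document; each statement's English description precedes it below -/
import Mathlib

section
/- For any vertex x and vector v of initial values on a connected d-regular graph, the entry at x of the vector ∏_{t=1}^m (A - λ_t I) v equals (∑_i v_i) · (1/n)·∏_{t=1}^m (d - λ_t); in particular it is a fixed nonzero scalar multiple of the global sum, independent of x. -/
open Matrix

/-- Conjugation of a list product of diagonal matrices by a unitary. -/
lemma conj_list_prod {N : Type*} [Fintype N] [DecidableEq N]
    (U : Matrix N N ℝ) (hU1 : U * star U = 1) (hU2 : star U * U = 1)
    (f : ℝ → N → ℝ) (l : List ℝ) :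
    (l.map fun c => U * Matrix.diagonal (f c) * star U).prod
      = U * Matrix.diagonal (fun i => (l.map fun c => f c i).prod) * star U := by
  induction l with
  | nil =>
    simp only [List.map_nil, List.prod_nil]
    have h1 : (Matrix.diagonal fun _ : N => (1 : ℝ)) = 1 := Matrix.diagonal_one
    rw [h1, mul_one, hU1]
  | cons c l ih =>
    have key : ∀ D E : Matrix N N ℝ,
        (U * D * star U) * (U * E * star U) = U * (D * E) * star U := by
      intro D E
      simp only [Matrix.mul_assoc]
      rw [← Matrix.mul_assoc (star U) U, hU2, Matrix.one_mul]
    simp only [List.map_cons, List.prod_cons, ih, key, Matrix.diagonal_mul_diagonal]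

/-- A vector in the kernel of `A - d•1` on a connected `d`-regular graph is constant. -/
lemma const_of_eigen {n d : ℕ} {G : SimpleGraph (Fin n)} [DecidableRel G.Adj]
    (hconn : G.Connected) (hreg : G.IsRegularOfDegree d)
    {w : Fin n → ℝ} (heig : G.adjMatrix ℝ *ᵥ w = (d : ℝ) • w) (a b : Fin n) :
    w a = w b := by
  haveI : Nonempty (Fin n) := hconn.nonempty
  obtain ⟨i0, -, hmax⟩ := Finset.exists_max_image Finset.univ w ⟨a, Finset.mem_univ a⟩
  have hmax' : ∀ j, w j ≤ w i0 := fun j => hmax j (Finset.mem_univ j)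
  have step : ∀ p q : Fin n, G.Adj p q → w p = w i0 → w q = w i0 := by
    intro p q hadj hp
    by_contra hq
    have hqlt : w q < w i0 := lt_of_le_of_ne (hmax' q) hq
    have hsum : ∑ u ∈ G.neighborFinset p, w u = (d : ℝ) * w p := by
      have h := congrFun heig p
      simpa using h
    have hlt : ∑ u ∈ G.neighborFinset p, w u < ∑ _u ∈ G.neighborFinset p, w i0 :=
      Finset.sum_lt_sum (fun i _ => hmax' i)
        ⟨q, (G.mem_neighborFinset p q).2 hadj, hqlt⟩
    rw [Finset.sum_const, show (G.neighborFinset p).card = d from hreg p,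
      nsmul_eq_mul, hsum, hp] at hlt
    exact lt_irrefl _ hlt
  have key : ∀ p q : Fin n, G.Walk p q → w p = w i0 → w q = w i0 := by
    intro p q walk
    induction walk with
    | nil => exact id
    | cons h _ ih => exact fun hp => ih (step _ _ h hp)
  obtain ⟨pa⟩ := hconn.preconnected i0 a
  obtain ⟨pb⟩ := hconn.preconnected i0 b
  rw [key i0 a pa rfl, key i0 b pb rfl]

/-- For any vertex `x` and vector `v` of initial values on a connected
`d`-regular graph, the entry at `x` of `∏_{t=1}^m (A - λ t I) v` equals
`(∑ i, v i) * (1/n) * ∏_{t=1}^m (d - λ t)`, a fixed scalar multiple of the global sum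
independent of `x`. -/
theorem stmt4 (n m d : ℕ) (G : SimpleGraph (Fin n)) [DecidableRel G.Adj]
    (hconn : G.Connected) (hreg : G.IsRegularOfDegree d)
    (lam : Fin (m + 1) → ℝ) (hanti : StrictAnti lam) (hlam0 : lam 0 = d)
    (hspec : spectrum ℝ (G.adjMatrix ℝ) = Set.range lam)
    (v : Fin n → ℝ) (x : Fin n) :
    (List.ofFn fun t : Fin m =>
        G.adjMatrix ℝ - lam t.succ • (1 : Matrix (Fin n) (Fin n) ℝ)).prod.mulVec v x =
      (∑ i, v i) * ((1 / (n : ℝ)) * ∏ t : Fin m, ((d : ℝ) - lam t.succ)) := by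
  haveI : Nonempty (Fin n) := hconn.nonempty
  set A : Matrix (Fin n) (Fin n) ℝ := G.adjMatrix ℝ with hA_def
  have hA : A.IsHermitian := by
    have hs : A.IsSymm := SimpleGraph.isSymm_adjMatrix G
    ext i j
    simp only [Matrix.conjTranspose_apply, star_trivial]
    exact congrFun (congrFun hs i) j
  set U : Matrix (Fin n) (Fin n) ℝ := (Matrix.IsHermitian.eigenvectorUnitary hA : Matrix (Fin n) (Fin n) ℝ) with hU_def
  have hU1 : U * star U = 1 :=
    Matrix.mem_unitaryGroup_iff.mp (Matrix.IsHermitian.eigenvectorUnitary hA).2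
  have hU2 : star U * U = 1 :=
    Matrix.mem_unitaryGroup_iff'.mp (Matrix.IsHermitian.eigenvectorUnitary hA).2
  have hst : A = U * Matrix.diagonal hA.eigenvalues * star U := by
    have := hA.spectral_theorem
    simpa [RCLike.ofReal_real_eq_id] using this
  have hconj : ∀ c : ℝ, A - c • (1 : Matrix (Fin n) (Fin n) ℝ)
      = U * Matrix.diagonal (fun i => hA.eigenvalues i - c) * star U := by
    intro c
    have hd : Matrix.diagonal (fun i => hA.eigenvalues i - c)
        = Matrix.diagonal hA.eigenvalues - c • (1 : Matrix (Fin n) (Fin n) ℝ) := by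
      rw [Matrix.smul_one_eq_diagonal, ← Matrix.diagonal_sub]
    rw [hd, Matrix.mul_sub, Matrix.sub_mul, ← hst]
    congr 1
    rw [Matrix.mul_smul, Matrix.smul_mul, mul_one, hU1]
  -- The full product over all eigenvalues is zero
  have hzero : ((List.ofFn lam).map fun c => A - c • (1 : Matrix (Fin n) (Fin n) ℝ)).prod = 0 := by
    have hfun : (fun c : ℝ => A - c • (1 : Matrix (Fin n) (Fin n) ℝ))
        = fun c => U * Matrix.diagonal (fun i => hA.eigenvalues i - c) * star U :=
      funext hconj
    rw [hfun, conj_list_prod U hU1 hU2 (fun c i => hA.eigenvalues i - c)]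
    have hdiag : (fun i => ((List.ofFn lam).map fun c => hA.eigenvalues i - c).prod)
        = fun _ => (0 : ℝ) := by
      funext i
      have hmem : hA.eigenvalues i ∈ Set.range lam := by
        rw [← hspec]; exact hA.eigenvalues_mem_spectrum_real i
      obtain ⟨t, ht⟩ := hmem
      apply List.prod_eq_zero
      have : (0 : ℝ) = hA.eigenvalues i - lam t := by rw [ht, sub_self]
      rw [this]
      exact List.mem_map_of_mem (List.mem_ofFn.2 ⟨t, rfl⟩)
    rw [hdiag, Matrix.diagonal_zero, Matrix.mul_zero, Matrix.zero_mul]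
  set P : Matrix (Fin n) (Fin n) ℝ :=
    (List.ofFn fun t : Fin m => A - lam t.succ • (1 : Matrix (Fin n) (Fin n) ℝ)).prod with hP_def
  have hfull : (A - (d : ℝ) • (1 : Matrix (Fin n) (Fin n) ℝ)) * P = 0 := by
    have hlist : (List.ofFn lam).map (fun c => A - c • (1 : Matrix (Fin n) (Fin n) ℝ))
        = (A - lam 0 • (1 : Matrix (Fin n) (Fin n) ℝ)) ::
          (List.ofFn fun t : Fin m => A - lam t.succ • (1 : Matrix (Fin n) (Fin n) ℝ)) := by
      rw [List.map_ofFn, List.ofFn_succ]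
      rfl
    rw [hlist, List.prod_cons] at hzero
    rw [← hlam0] at *
    exact hzero
  set u : Fin n → ℝ := P *ᵥ v with hu_def
  have heig : A *ᵥ u = (d : ℝ) • u := by
    have h0 : (A - (d : ℝ) • (1 : Matrix (Fin n) (Fin n) ℝ)) *ᵥ u = 0 := by
      rw [hu_def, Matrix.mulVec_mulVec, hfull, Matrix.zero_mulVec]
    rw [Matrix.sub_mulVec, Matrix.smul_mulVec, Matrix.one_mulVec, sub_eq_zero] at h0
    exact h0
  have hconstw : ∀ y : Fin n, u y = u x := fun y => const_of_eigen hconn hreg heig y x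
  -- column sums of P
  have haux : ∀ l : List ℝ, (fun _ => (1 : ℝ)) ᵥ* (l.map fun c => A - c • (1 : Matrix (Fin n) (Fin n) ℝ)).prod
      = ((l.map fun c => (d : ℝ) - c).prod) • (fun _ => (1 : ℝ)) := by
    intro l
    induction l with
    | nil => simp [Matrix.vecMul_one]
    | cons c l ih =>
      simp only [List.map_cons, List.prod_cons]
      rw [← Matrix.vecMul_vecMul]
      have h1 : (fun _ => (1 : ℝ)) ᵥ* (A - c • (1 : Matrix (Fin n) (Fin n) ℝ))
          = ((d : ℝ) - c) • (fun _ => (1 : ℝ)) := by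
        rw [Matrix.vecMul_sub]
        funext j
        have hva : ((fun _ => (1 : ℝ)) ᵥ* A) j = (d : ℝ) := by
          rw [hA_def]
          rw [SimpleGraph.adjMatrix_vecMul_apply]
          simp [hreg j]
        have hvb : ((fun _ => (1 : ℝ)) ᵥ* (c • (1 : Matrix (Fin n) (Fin n) ℝ))) j = c := by
          simp [Matrix.vecMul, dotProduct, Matrix.smul_apply, Matrix.one_apply]
        simp [Pi.sub_apply, hva, hvb]
      rw [h1, Matrix.smul_vecMul, ih, smul_smul]
  have hcol : (fun _ => (1 : ℝ)) ᵥ* P = (∏ t : Fin m, ((d : ℝ) - lam t.succ)) • (fun _ => (1 : ℝ)) := by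
    have hl : (List.ofFn fun t : Fin m => A - lam t.succ • (1 : Matrix (Fin n) (Fin n) ℝ))
        = (List.ofFn fun t : Fin m => lam t.succ).map (fun c => A - c • (1 : Matrix (Fin n) (Fin n) ℝ)) := by
      rw [List.map_ofFn]; rfl
    rw [hP_def, hl, haux]
    congr 1
    rw [List.map_ofFn]
    exact List.prod_ofFn
  -- sum of entries of u
  have hsum : ∑ y, u y = (∏ t : Fin m, ((d : ℝ) - lam t.succ)) * ∑ i, v i := by
    have h1 : ∑ y, u y = ∑ j, (∑ y, P y j) * v j := by
      simp only [hu_def, Matrix.mulVec, dotProduct]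
      rw [Finset.sum_comm]
      simp [Finset.sum_mul]
    have h2 : ∀ j, ∑ y, P y j = ∏ t : Fin m, ((d : ℝ) - lam t.succ) := by
      intro j
      have := congrFun hcol j
      simpa [Matrix.vecMul, dotProduct] using this
    rw [h1]
    simp only [h2]
    rw [← Finset.mul_sum]
  have hn : (n : ℝ) ≠ 0 := by
    have : 0 < n := Fin.pos_iff_nonempty.mpr ‹Nonempty (Fin n)›
    exact_mod_cast this.ne'
  have hnsum : (n : ℝ) * u x = (∏ t : Fin m, ((d : ℝ) - lam t.succ)) * ∑ i, v i := by
    have hc : ∑ y, u y = (n : ℝ) * u x := by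
      calc ∑ y, u y = ∑ _y : Fin n, u x := Finset.sum_congr rfl fun y _ => hconstw y
      _ = (n : ℝ) * u x := by simp [Finset.sum_const, mul_comm]
    rw [← hsum, hc]
  have : u x = (∑ i, v i) * ((1 / (n : ℝ)) * ∏ t : Fin m, ((d : ℝ) - lam t.succ)) := by
    field_simp
    rw [mul_comm (u x) (n : ℝ), hnsum]
    ring
  exact this
end

section
/- Let A be the adjacency matrix of a d-regular graph G on n vertices and p a polynomial of degree m with p(0) = 1 such that the operator norm ‖p(A - dI) - J/n‖ < 1/(n-1). Then every entry of p(A - dI) is positive, and consequently G has diameter at most m. -/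
open scoped Matrix.Norms.L2Operator
open Matrix

lemma aux_pow_zero (n d : ℕ) (G : SimpleGraph (Fin n)) [DecidableRel G.Adj]
    (k : ℕ) :
    ∀ i j : Fin n, (∀ w : G.Walk i j, k < w.length) →
      ((G.adjMatrix ℝ - (d : ℝ) • (1 : Matrix (Fin n) (Fin n) ℝ)) ^ k) i j = 0 := by
  induction k with
  | zero =>
    intro i j h
    have hne : i ≠ j := by
      rintro rfl
      simpa using h SimpleGraph.Walk.nil
    simp [Matrix.one_apply_ne hne]
  | succ k ih =>
    intro i j h
    rw [pow_succ', Matrix.mul_apply]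
    refine Finset.sum_eq_zero fun l _ => ?_
    by_cases hl : l = i
    · subst hl
      rw [ih l j fun w => Nat.lt_of_succ_lt (h w), mul_zero]
    · by_cases hadj : G.Adj i l
      · rw [ih l j fun w => Nat.succ_lt_succ_iff.mp (by simpa using h (SimpleGraph.Walk.cons hadj w)),
          mul_zero]
      · have : i ≠ l := fun e => hl e.symm
        simp [Matrix.sub_apply, hadj, Matrix.one_apply_ne this]

lemma my_sum_mulVec {n : ℕ} (s : Finset ℕ) (f : ℕ → Matrix (Fin n) (Fin n) ℝ) (v : Fin n → ℝ) :
    (∑ k ∈ s, f k) *ᵥ v = ∑ k ∈ s, f k *ᵥ v := by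
  ext i
  simp [Matrix.mulVec, dotProduct, Matrix.sum_apply, Finset.sum_mul]
  rw [Finset.sum_comm]

/-- If `A` is the adjacency matrix of a `d`-regular graph on `n ≥ 2`
vertices and `p` is a polynomial of degree `m` with `p 0 = 1` such that the operator
norm `‖p(A - dI) - J/n‖ < 1/(n-1)`, then every entry of `p(A - dI)` is positive and
the diameter of the graph is at most `m`. -/
theorem stmt9 (n m d : ℕ) (hn : 2 ≤ n) (G : SimpleGraph (Fin n)) [DecidableRel G.Adj]
    (hreg : G.IsRegularOfDegree d) (p : Polynomial ℝ)
    (hdeg : p.natDegree = m) (hp0 : p.eval 0 = 1)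
    (hnorm : ‖Polynomial.aeval
          (G.adjMatrix ℝ - (d : ℝ) • (1 : Matrix (Fin n) (Fin n) ℝ)) p -
        (1 / (n : ℝ)) • Matrix.of (fun _ _ : Fin n => (1 : ℝ))‖ < 1 / ((n : ℝ) - 1)) :
    (∀ i j : Fin n,
        0 < Polynomial.aeval
            (G.adjMatrix ℝ - (d : ℝ) • (1 : Matrix (Fin n) (Fin n) ℝ)) p i j) ∧
      G.diam ≤ m := by
  set A := G.adjMatrix ℝ with hA
  set M := A - (d : ℝ) • (1 : Matrix (Fin n) (Fin n) ℝ) with hM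
  set P := Polynomial.aeval M p with hP
  set ones : Fin n → ℝ := fun _ => 1 with hones
  have hnpos : (0:ℝ) < n := by positivity
  have hn0 : (n:ℝ) ≠ 0 := ne_of_gt hnpos
  have hM1 : M *ᵥ ones = 0 := by
    funext v
    have := SimpleGraph.adjMatrix_mulVec_const_apply_of_regular (α := ℝ) (a := (1:ℝ)) hreg (v := v)
    simp only [hM, Matrix.sub_mulVec, Matrix.smul_mulVec, Matrix.one_mulVec]
    have h1 : A *ᵥ ones = fun _ => (d:ℝ) := by
      funext w
      rw [hones]
      rw [show (fun _ : Fin n => (1:ℝ)) = Function.const (Fin n) (1:ℝ) from rfl,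
        SimpleGraph.adjMatrix_mulVec_const_apply_of_regular hreg, mul_one]
    rw [h1]
    simp [hones]
  have hpow1 : ∀ k : ℕ, M ^ (k+1) *ᵥ ones = 0 := by
    intro k
    rw [pow_succ, ← Matrix.mulVec_mulVec, hM1, Matrix.mulVec_zero]
  have hP1 : P *ᵥ ones = ones := by
    rw [hP, Polynomial.aeval_eq_sum_range, my_sum_mulVec]
    rw [Finset.sum_eq_single_of_mem 0 (Finset.mem_range.mpr (Nat.succ_pos _))]
    · simp [Polynomial.coeff_zero_eq_eval_zero, hp0]
    · intro k _ hk
      obtain ⟨t, rfl⟩ := Nat.exists_eq_succ_of_ne_zero hk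
      rw [Matrix.smul_mulVec, hpow1, smul_zero]
  set Jn := (1 / (n : ℝ)) • Matrix.of (fun _ _ : Fin n => (1 : ℝ)) with hJn
  set B := P - Jn with hB
  have hJ1 : Jn *ᵥ ones = ones := by
    funext i
    rw [hJn, Matrix.smul_mulVec]
    simp [Matrix.mulVec, dotProduct, hones]
    field_simp
  have hB1 : B *ᵥ ones = 0 := by
    rw [hB, Matrix.sub_mulVec, hP1, hJ1, sub_self]
  -- symmetry
  have hMT : Mᵀ = M := by
    rw [hM, Matrix.transpose_sub, Matrix.transpose_smul, Matrix.transpose_one, hA,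
      SimpleGraph.transpose_adjMatrix]
  have hPT : Pᵀ = P := by
    rw [hP, Polynomial.aeval_eq_sum_range, Matrix.transpose_sum]
    congr 1
    funext k
    rw [Matrix.transpose_smul, Matrix.transpose_pow, hMT]
  have hBT : Bᵀ = B := by
    rw [hB, Matrix.transpose_sub, hPT, hJn]
    congr 1
  have rowsum : ∀ k, ∑ l, B k l = 0 := by
    intro k
    have := congrFun hB1 k
    simpa [Matrix.mulVec, dotProduct, hones] using this
  have colsum : ∀ l, ∑ k, B k l = 0 := by
    intro l
    have : ∑ k, B k l = ∑ k, Bᵀ l k := by simp [Matrix.transpose_apply]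
    rw [this, hBT]
    exact rowsum l
  have hnm1 : (0:ℝ) < (n:ℝ) - 1 := by
    have : (2:ℝ) ≤ n := by exact_mod_cast hn
    linarith
  have hsum : ∀ a : Fin n, ∑ k, ((if k = a then (1:ℝ) else 0) - 1/n)^2 = ((n:ℝ)-1)/n := by
    intro a
    have h1 : ∀ k : Fin n, ((if k = a then (1:ℝ) else 0) - 1/n)^2
        = (if k = a then 1 - 2/(n:ℝ) else 0) + 1/(n:ℝ)^2 := by
      intro k; split <;> ring
    rw [Finset.sum_congr rfl fun k _ => h1 k, Finset.sum_add_distrib,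
      Finset.sum_ite_eq' Finset.univ a (fun _ => 1 - 2/(n:ℝ))]
    simp [Finset.card_univ]
    field_simp
    ring
  have hBentry : ∀ i j : Fin n, |B i j| ≤ ‖B‖ * (((n:ℝ) - 1)/n) := by
    intro i j
    set u : EuclideanSpace ℝ (Fin n) := WithLp.toLp 2 (fun k => (if k = i then (1:ℝ) else 0) - 1/n) with hu
    set v : EuclideanSpace ℝ (Fin n) := WithLp.toLp 2 (fun k => (if k = j then (1:ℝ) else 0) - 1/n) with hv
    have hBv : B *ᵥ (v : Fin n → ℝ) = fun k => B k j := by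
      funext k
      show ∑ l, B k l * v l = B k j
      have h1 : ∀ l : Fin n, B k l * v l = (if l = j then B k l else 0) - B k l * (1/n) := by
        intro l
        rw [hv]
        show B k l * ((if l = j then (1:ℝ) else 0) - 1/n) = _
        split <;> ring
      rw [Finset.sum_congr rfl fun l _ => h1 l, Finset.sum_sub_distrib,
        Finset.sum_ite_eq' Finset.univ j (fun l => B k l), ← Finset.sum_mul, rowsum k]
      simp
    have hinner : (inner ℝ u ((EuclideanSpace.equiv (Fin n) ℝ).symm (B *ᵥ v)) : ℝ) = B i j := by
      rw [PiLp.inner_apply]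
      simp only [RCLike.inner_apply, starRingEnd_apply, star_trivial]
      have : ∀ k : Fin n, u k * ((EuclideanSpace.equiv (Fin n) ℝ).symm (B *ᵥ v)) k
          = (if k = i then B k j else 0) - B k j * (1/n) := by
        intro k
        have hk : ((EuclideanSpace.equiv (Fin n) ℝ).symm (B *ᵥ v)) k = B k j := by
          simp [hBv]
        rw [hk, hu]
        show ((if k = i then (1:ℝ) else 0) - 1/n) * B k j = _
        split <;> ring
      rw [Finset.sum_congr rfl fun k _ => (mul_comm _ _).trans (this k), Finset.sum_sub_distrib,
        Finset.sum_ite_eq' Finset.univ i (fun k => B k j), ← Finset.sum_mul, colsum j]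
      simp
    have hnu : ‖u‖ = Real.sqrt (((n:ℝ)-1)/n) := by
      rw [EuclideanSpace.norm_eq]
      congr 1
      rw [← hsum i]
      refine Finset.sum_congr rfl fun k _ => ?_
      rw [hu]
      show ‖(if k = i then (1:ℝ) else 0) - 1/n‖^2 = _
      rw [Real.norm_eq_abs, sq_abs]
    have hnv : ‖v‖ = Real.sqrt (((n:ℝ)-1)/n) := by
      rw [EuclideanSpace.norm_eq]
      congr 1
      rw [← hsum j]
      refine Finset.sum_congr rfl fun k _ => ?_
      rw [hv]
      show ‖(if k = j then (1:ℝ) else 0) - 1/n‖^2 = _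
      rw [Real.norm_eq_abs, sq_abs]
    have hfrac : (0:ℝ) ≤ ((n:ℝ)-1)/n := by positivity
    calc |B i j| = |(inner ℝ u ((EuclideanSpace.equiv (Fin n) ℝ).symm (B *ᵥ v)) : ℝ)| := by
          rw [hinner]
      _ ≤ ‖u‖ * ‖(EuclideanSpace.equiv (Fin n) ℝ).symm (B *ᵥ v)‖ := abs_real_inner_le_norm _ _
      _ ≤ ‖u‖ * (‖B‖ * ‖v‖) :=
          mul_le_mul_of_nonneg_left (Matrix.l2_opNorm_mulVec B v) (norm_nonneg u)
      _ = ‖B‖ * (‖u‖ * ‖v‖) := by ring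
      _ = ‖B‖ * (((n:ℝ)-1)/n) := by rw [hnu, hnv, Real.mul_self_sqrt hfrac]
  have hBn : ‖B‖ < 1 / ((n:ℝ) - 1) := hnorm
  have hfracpos : (0:ℝ) < ((n:ℝ)-1)/n := by positivity
  have hlt : ∀ i j : Fin n, |B i j| < 1/(n:ℝ) := by
    intro i j
    calc |B i j| ≤ ‖B‖ * (((n:ℝ)-1)/n) := hBentry i j
      _ < (1/((n:ℝ)-1)) * (((n:ℝ)-1)/n) := mul_lt_mul_of_pos_right hBn hfracpos
      _ = 1/(n:ℝ) := by field_simp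
  have hPpos : ∀ i j : Fin n, 0 < P i j := by
    intro i j
    have hPB : P i j = B i j + 1/(n:ℝ) := by
      rw [hB]
      simp [Matrix.sub_apply, hJn]
    have h2 := (abs_lt.mp (hlt i j)).1
    rw [hPB]
    linarith
  have hwalk : ∀ i j : Fin n, ∃ w : G.Walk i j, w.length ≤ m := by
    intro i j
    by_contra hcon
    push_neg at hcon
    have hz : P i j = 0 := by
      rw [hP, Polynomial.aeval_eq_sum_range]
      rw [Matrix.sum_apply]
      refine Finset.sum_eq_zero fun k hk => ?_
      have hk' : k ≤ m := by
        rw [hdeg] at hk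
        exact Nat.lt_succ_iff.mp (Finset.mem_range.mp hk)
      have haux := aux_pow_zero n d G k i j fun w => lt_of_le_of_lt hk' (hcon w)
      rw [← hA, ← hM] at haux
      rw [Matrix.smul_apply, haux, smul_zero]
    exact absurd hz (ne_of_gt (hPpos i j))
  have hediam : G.ediam ≤ (m : ℕ∞) := by
    refine SimpleGraph.ediam_le_of_edist_le fun a b => ?_
    obtain ⟨w, hw⟩ := hwalk a b
    exact (SimpleGraph.edist_le w).trans (by exact_mod_cast hw)
  have hdiam : G.diam ≤ m := ENat.toNat_le_of_le_coe hediam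
  exact ⟨hPpos, hdiam⟩
end
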